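/- If μ = ⊗_{i=1}^n μ_i is a product probability measure on Ω = [q]^V (V = [n]) and α is any probability distribution over subsets of V, then for all f ≥ 0: γ(α) Ent_μ(f) ≤ Σ_{A⊆V} α_A μ(Ent_A f), where γ(α) = min_i Σ_{A∋i} α_A. That is, product measures satisfy the Shearer entropy inequality with constant 1. -/

import Mathlib

open Finset Matrix
open scoped Classical

noncomputable section

variable {V : Type*} [Fintype V] {q : ℕ}

/-- Entropy of a nonnegative function `f` with respect to the weights `μ`:
`Ent_μ f = μ(f log f) - μ(f) log μ(f)`. -/
def ent {X : Type*} [Fintype X] (μ f : X → ℝ) : ℝ :=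
  (∑ x, μ x * (f x * Real.log (f x))) - (∑ x, μ x * f x) * Real.log (∑ x, μ x * f x)

/-- The conditional measure `μ_A^τ`: `μ` conditioned on agreeing with `τ` outside `A`. -/
def condMeas (μ : (V → Fin q) → ℝ) (A : Finset V) (τ : V → Fin q) :
    (V → Fin q) → ℝ :=
  fun σ => (if ∀ i ∉ A, σ i = τ i then μ σ else 0) /
    (∑ σ', if ∀ i ∉ A, σ' i = τ i then μ σ' else 0)

/-- Conditional expectation `μ_A f : τ ↦ μ_A^τ(f)`. -/
def condExp (μ : (V → Fin q) → ℝ) (A : Finset V) (f : (V → Fin q) → ℝ) :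
    (V → Fin q) → ℝ :=
  fun τ => ∑ σ, condMeas μ A τ σ * f σ

/-- The conditional entropy `Ent_A f : τ ↦ Ent_{μ_A^τ} f`. -/
def entA (μ : (V → Fin q) → ℝ) (A : Finset V) (f : (V → Fin q) → ℝ) :
    (V → Fin q) → ℝ :=
  fun τ => ent (condMeas μ A τ) f

/-- Minimum covering probability `γ(α) = min_i Σ_{A ∋ i} α_A`. -/
def gam [Nonempty V] (α : Finset V → ℝ) : ℝ :=
  ⨅ i : V, ∑ A ∈ univ.filter (fun A => i ∈ A), α A

set_option linter.unusedSectionVars false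
set_option linter.unusedVariables false


/-- glue A τ y : equals y on A, τ off A -/
def glue (A : Finset V) (τ y : V → Fin q) : V → Fin q := fun i => if i ∈ A then y i else τ i

def pm (μi : V → Fin q → ℝ) : (V → Fin q) → ℝ := fun σ => ∏ i, μi i (σ i)

def EE (μi : V → Fin q → ℝ) (A : Finset V) (g : (V → Fin q) → ℝ) : (V → Fin q) → ℝ :=
  fun τ => ∑ y, pm μi y * g (glue A τ y)

def HH (μi : V → Fin q → ℝ) (A : Finset V) (g : (V → Fin q) → ℝ) : (V → Fin q) → ℝ :=
  fun τ => EE μi A (fun σ => g σ * Real.log (g σ)) τ -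
    EE μi A g τ * Real.log (EE μi A g τ)

def DD (x y : ℝ) : ℝ := x * Real.log x - x * Real.log y - x + y

section basic
variable {μi : V → Fin q → ℝ}

lemma sum_pi_prod (g : V → Fin q → ℝ) :
    ∑ y : V → Fin q, ∏ i, g i (y i) = ∏ i, ∑ a, g i a := (Fintype.prod_sum g).symm

lemma pm_sum (h1 : ∀ i, ∑ a, μi i a = 1) : ∑ y : V → Fin q, pm μi y = 1 := by
  unfold pm; rw [sum_pi_prod]; simp [h1]

lemma pm_pos (hpos : ∀ i a, 0 < μi i a) (σ : V → Fin q) : 0 < pm μi σ :=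
  Finset.prod_pos fun i _ => hpos i (σ i)

lemma pm_nonneg (hpos : ∀ i a, 0 < μi i a) (σ : V → Fin q) : 0 ≤ pm μi σ :=
  (pm_pos hpos σ).le

-- glue lemmas
lemma glue_univ (τ y : V → Fin q) : glue univ τ y = y := by
  funext j; simp [glue]

lemma glue_empty (τ y : V → Fin q) : glue ∅ τ y = τ := by
  funext j; simp [glue]

lemma glue_glue_left (A : Finset V) (τ z y : V → Fin q) :
    glue A τ (glue A z y) = glue A τ y := by
  funext j; by_cases h : j ∈ A <;> simp [glue, h]

lemma glue_comp (A B : Finset V) (τ z y : V → Fin q) :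
    glue A (glue B τ z) y = glue (A ∪ B) τ (glue A z y) := by
  funext j
  by_cases hA : j ∈ A <;> by_cases hB : j ∈ B <;> simp [glue, hA, hB]

lemma glue_of_agree {A : Finset V} {τ y : V → Fin q} (h : ∀ i ∉ A, y i = τ i) :
    glue A τ y = y := by
  funext j; by_cases hj : j ∈ A
  · simp [glue, hj]
  · simp [glue, hj, h j hj]

lemma glue_update {C : Finset V} {i : V} (hi : i ∉ C) (τ z : V → Fin q) (a : Fin q) :
    glue C (Function.update τ i a) z = Function.update (glue C τ z) i a := by
  funext j
  rcases eq_or_ne j i with rfl | hj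
  · simp [glue, hi]
  · by_cases hc : j ∈ C <;> simp [glue, hc, Function.update_of_ne hj]

lemma glue_single (i : V) (τ y : V → Fin q) :
    glue {i} τ y = Function.update τ i (y i) := by
  funext j; rcases eq_or_ne j i with rfl | hj
  · simp [glue]
  · simp [glue, hj, Function.update_of_ne hj]

-- the fundamental swap lemma
lemma pm_glue_mul (A : Finset V) (y z : V → Fin q) :
    pm μi (glue A z y) * pm μi (glue A y z) = pm μi y * pm μi z := by
  unfold pm
  rw [← Finset.prod_mul_distrib, ← Finset.prod_mul_distrib]
  refine Finset.prod_congr rfl fun j _ => ?_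
  by_cases h : j ∈ A <;> simp [glue, h, mul_comm]

lemma glue_glue_cancel (A : Finset V) (y z : V → Fin q) :
    glue A (glue A y z) (glue A z y) = y := by
  funext j; by_cases h : j ∈ A <;> simp [glue, h]

lemma swap_sum (A : Finset V) (K : (V → Fin q) → (V → Fin q) → ℝ) :
    ∑ y : V → Fin q, ∑ z : V → Fin q, pm μi y * pm μi z * K y z
      = ∑ y : V → Fin q, ∑ z : V → Fin q,
          pm μi y * pm μi z * K (glue A z y) (glue A y z) := by
  have e1 : ∀ F : (V → Fin q) → (V → Fin q) → ℝ,
      ∑ p : (V → Fin q) × (V → Fin q), F p.1 p.2 = ∑ y, ∑ z, F y z :=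
    fun F => Fintype.sum_prod_type _
  rw [← e1 (fun y z => pm μi y * pm μi z * K y z),
    ← e1 (fun y z => pm μi y * pm μi z * K (glue A z y) (glue A y z))]
  refine Fintype.sum_equiv ⟨fun p => (glue A p.2 p.1, glue A p.1 p.2),
    fun p => (glue A p.2 p.1, glue A p.1 p.2), ?_, ?_⟩ _ _ ?_
  · intro p
    ext j <;> by_cases h : j ∈ A <;> simp [glue, h]
  · intro p
    ext j <;> by_cases h : j ∈ A <;> simp [glue, h]
  · intro p
    simp only [Equiv.coe_fn_mk]
    rw [pm_glue_mul, glue_glue_cancel, glue_glue_cancel]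
end basic

section main
variable {μi : V → Fin q → ℝ}

/-- Tower property. -/
lemma EE_tower (h1 : ∀ i, ∑ a, μi i a = 1) (A B : Finset V) (h : (V → Fin q) → ℝ)
    (τ : V → Fin q) : EE μi B (EE μi A h) τ = EE μi (A ∪ B) h τ := by
  unfold EE
  have step1 : ∑ z : V → Fin q, pm μi z * ∑ y : V → Fin q, pm μi y * h (glue A (glue B τ z) y)
      = ∑ y : V → Fin q, ∑ z : V → Fin q,
          pm μi y * pm μi z * h (glue (A ∪ B) τ (glue A z y)) := by
    rw [Finset.sum_comm]
    refine Finset.sum_congr rfl fun z _ => ?_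
    rw [Finset.mul_sum]
    refine Finset.sum_congr rfl fun y _ => ?_
    rw [glue_comp]; ring
  rw [step1, swap_sum A (fun y z => h (glue (A ∪ B) τ y)) |>.symm]
  have hz : ∑ z : V → Fin q, pm μi z = 1 := pm_sum h1
  refine Finset.sum_congr rfl fun y _ => ?_
  calc ∑ z : V → Fin q, pm μi y * pm μi z * h (glue (A ∪ B) τ y)
      = (∑ z : V → Fin q, pm μi z) * (pm μi y * h (glue (A ∪ B) τ y)) := by
        rw [Finset.sum_mul]; exact Finset.sum_congr rfl fun z _ => by ring
    _ = pm μi y * h (glue (A ∪ B) τ y) := by rw [hz, one_mul]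

/-- Averaging the conditional expectation gives the full average. -/
lemma EE_global (h1 : ∀ i, ∑ a, μi i a = 1) (A : Finset V) (g : (V → Fin q) → ℝ) :
    ∑ τ, pm μi τ * EE μi A g τ = ∑ τ, pm μi τ * g τ := by
  unfold EE
  have step1 : ∑ τ : V → Fin q, pm μi τ * ∑ y : V → Fin q, pm μi y * g (glue A τ y)
      = ∑ τ : V → Fin q, ∑ y : V → Fin q, pm μi τ * pm μi y * g (glue A τ y) := by
    refine Finset.sum_congr rfl fun τ _ => ?_
    rw [Finset.mul_sum]
    exact Finset.sum_congr rfl fun y _ => by ring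
  rw [step1, swap_sum A (fun τ y => g (glue A τ y))]
  have hg : ∀ τ y : V → Fin q, glue A (glue A y τ) (glue A τ y) = y := fun τ y => by
    funext j; by_cases h : j ∈ A <;> simp [glue, h]
  have hz : ∑ z : V → Fin q, pm μi z = 1 := pm_sum h1
  calc ∑ τ : V → Fin q, ∑ y : V → Fin q, pm μi τ * pm μi y * g (glue A (glue A y τ) (glue A τ y))
      = ∑ y : V → Fin q, (∑ τ : V → Fin q, pm μi τ) * (pm μi y * g y) := by
        rw [Finset.sum_comm]
        refine Finset.sum_congr rfl fun y _ => ?_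
        rw [Finset.sum_mul]
        exact Finset.sum_congr rfl fun τ _ => by rw [hg]; ring
    _ = ∑ y : V → Fin q, pm μi y * g y := by
        refine Finset.sum_congr rfl fun y _ => by rw [hz, one_mul]

lemma EE_empty (h1 : ∀ i, ∑ a, μi i a = 1) (g : (V → Fin q) → ℝ) (τ : V → Fin q) :
    EE μi ∅ g τ = g τ := by
  unfold EE
  simp only [glue_empty]
  rw [← Finset.sum_mul, pm_sum h1, one_mul]

lemma EE_univ (g : (V → Fin q) → ℝ) (τ : V → Fin q) :
    EE μi univ g τ = ∑ y, pm μi y * g y := by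
  unfold EE; simp only [glue_univ]

lemma EE_nonneg (hpos : ∀ i a, 0 < μi i a) {g : (V → Fin q) → ℝ} (hg : ∀ σ, 0 ≤ g σ)
    (A : Finset V) (τ : V → Fin q) : 0 ≤ EE μi A g τ :=
  Finset.sum_nonneg fun y _ => mul_nonneg (pm_nonneg hpos y) (hg _)

lemma EE_sub (A : Finset V) (g h : (V → Fin q) → ℝ) (τ : V → Fin q) :
    EE μi A (fun σ => g σ - h σ) τ = EE μi A g τ - EE μi A h τ := by
  unfold EE
  rw [← Finset.sum_sub_distrib]
  exact Finset.sum_congr rfl fun y _ => by ring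

/-- Single-site conditional expectation. -/
lemma EE_single (h1 : ∀ i, ∑ a, μi i a = 1) (i : V) (g : (V → Fin q) → ℝ) (τ : V → Fin q) :
    EE μi {i} g τ = ∑ a, μi i a * g (Function.update τ i a) := by
  unfold EE
  have key : ∀ y : V → Fin q, pm μi y * g (glue {i} τ y)
      = ∏ j, (μi j (y j) * (if j = i then g (Function.update τ i (y j)) else 1)) := by
    intro y
    rw [Finset.prod_mul_distrib]
    have : (∏ j, if j = i then g (Function.update τ i (y j)) else (1:ℝ))
        = g (Function.update τ i (y i)) := by
      rw [Finset.prod_ite_eq' univ i (fun j => g (Function.update τ i (y j)))]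
      simp
    rw [this, glue_single]
    rfl
  calc ∑ y : V → Fin q, pm μi y * g (glue {i} τ y)
      = ∑ y : V → Fin q, ∏ j, (μi j (y j) * (if j = i then g (Function.update τ i (y j)) else 1)) :=
        Finset.sum_congr rfl fun y _ => key y
    _ = ∏ j, ∑ a, (μi j a * (if j = i then g (Function.update τ i a) else 1)) :=
        sum_pi_prod (fun j a => μi j a * (if j = i then g (Function.update τ i a) else 1))
    _ = ∑ a, μi i a * g (Function.update τ i a) := by
        rw [Finset.prod_eq_single i]
        · simp
        · intro j _ hj
          simp only [if_neg hj, mul_one]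
          exact h1 j
        · simp
end main

section Dfacts

lemma DD_zero_zero : DD 0 0 = 0 := by simp [DD]

lemma DD_zero_left (y : ℝ) : DD 0 y = y := by simp [DD]

lemma gibbs {x t : ℝ} (hx : 0 ≤ x) (ht : 0 < t) : x * Real.log t + x - t ≤ x * Real.log x := by
  rcases eq_or_lt_of_le hx with rfl | hx'
  · simp [ht.le]
  · have h := Real.log_le_sub_one_of_pos (div_pos ht hx')
    rw [Real.log_div ht.ne' hx'.ne'] at h
    have := mul_le_mul_of_nonneg_left h hx'.le
    rw [mul_sub] at this
    have hxx : x * (t / x - 1) = t - x := by field_simp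
    nlinarith [this]

lemma DD_nonneg {x y : ℝ} (hx : 0 ≤ x) (hy : 0 ≤ y) (h0 : y = 0 → x = 0) : 0 ≤ DD x y := by
  rcases eq_or_lt_of_le hy with rfl | hy'
  · rw [h0 rfl, DD_zero_zero]
  · have := gibbs hx hy'
    unfold DD; linarith

lemma DD_homog {c x y : ℝ} (hc : 0 ≤ c) (hx : 0 ≤ x) (hy : 0 ≤ y) (h0 : y = 0 → x = 0) :
    DD (c * x) (c * y) = c * DD x y := by
  rcases eq_or_lt_of_le hc with rfl | hc'
  · simp [DD]
  rcases eq_or_lt_of_le hx with rfl | hx'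
  · simp [DD_zero_left, mul_zero, DD]
  have hy' : 0 < y := lt_of_le_of_ne hy fun h => by simp [h0 h.symm] at hx'
  unfold DD
  rw [Real.log_mul hc'.ne' hx'.ne', Real.log_mul hc'.ne' hy'.ne']
  ring

lemma DD_add {x₁ x₂ y₁ y₂ : ℝ} (hx₁ : 0 ≤ x₁) (hx₂ : 0 ≤ x₂) (hy₁ : 0 ≤ y₁) (hy₂ : 0 ≤ y₂)
    (h₁ : y₁ = 0 → x₁ = 0) (h₂ : y₂ = 0 → x₂ = 0) :
    DD (x₁ + x₂) (y₁ + y₂) ≤ DD x₁ y₁ + DD x₂ y₂ := by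
  rcases eq_or_lt_of_le hy₁ with rfl | hy₁'
  · rw [h₁ rfl]; simp [DD_zero_zero]
  rcases eq_or_lt_of_le hy₂ with rfl | hy₂'
  · rw [h₂ rfl]; simp [DD_zero_zero]
  have hY : 0 < y₁ + y₂ := by linarith
  rcases eq_or_lt_of_le (add_nonneg hx₁ hx₂) with hX0 | hX
  · have hx1 : x₁ = 0 := by linarith
    have hx2 : x₂ = 0 := by linarith
    rw [hx1, hx2]
    simp [DD_zero_left]
  · set s : ℝ := (x₁ + x₂) / (y₁ + y₂) with hs
    have hs' : 0 < s := div_pos hX hY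
    have g1 := gibbs hx₁ (mul_pos hy₁' hs')
    have g2 := gibbs hx₂ (mul_pos hy₂' hs')
    rw [Real.log_mul hy₁'.ne' hs'.ne'] at g1
    rw [Real.log_mul hy₂'.ne' hs'.ne'] at g2
    have hsY : s * (y₁ + y₂) = x₁ + x₂ := by rw [hs]; exact div_mul_cancel₀ _ hY.ne'
    have hlogs : Real.log s = Real.log (x₁ + x₂) - Real.log (y₁ + y₂) :=
      Real.log_div hX.ne' hY.ne'
    unfold DD
    nlinarith [g1, g2]

lemma DD_jensen {ι : Type*} [Fintype ι] (c x y : ι → ℝ) (hc : ∀ i, 0 ≤ c i)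
    (hx : ∀ i, 0 ≤ x i) (hy : ∀ i, 0 ≤ y i) (h0 : ∀ i, y i = 0 → x i = 0) :
    DD (∑ i, c i * x i) (∑ i, c i * y i) ≤ ∑ i, c i * DD (x i) (y i) := by
  classical
  have key : ∀ s : Finset ι,
      DD (∑ i ∈ s, c i * x i) (∑ i ∈ s, c i * y i) ≤ ∑ i ∈ s, c i * DD (x i) (y i) := by
    intro s
    induction s using Finset.induction_on with
    | empty => simp [DD_zero_zero]
    | @insert a s ha ih =>
      rw [Finset.sum_insert ha, Finset.sum_insert ha, Finset.sum_insert ha]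
      have hax : 0 ≤ c a * x a := mul_nonneg (hc a) (hx a)
      have hay : 0 ≤ c a * y a := mul_nonneg (hc a) (hy a)
      have hsx : 0 ≤ ∑ i ∈ s, c i * x i :=
        Finset.sum_nonneg fun i _ => mul_nonneg (hc i) (hx i)
      have hsy : 0 ≤ ∑ i ∈ s, c i * y i :=
        Finset.sum_nonneg fun i _ => mul_nonneg (hc i) (hy i)
      have hzero1 : c a * y a = 0 → c a * x a = 0 := by
        intro h
        rcases mul_eq_zero.mp h with h | h
        · rw [h, zero_mul]
        · rw [h0 a h, mul_zero]
      have hzero2 : (∑ i ∈ s, c i * y i) = 0 → (∑ i ∈ s, c i * x i) = 0 := by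
        intro h
        have := (Finset.sum_eq_zero_iff_of_nonneg
          (fun i _ => mul_nonneg (hc i) (hy i))).mp h
        refine Finset.sum_eq_zero fun i hi => ?_
        rcases mul_eq_zero.mp (this i hi) with h' | h'
        · rw [h', zero_mul]
        · rw [h0 i h', mul_zero]
      calc DD (c a * x a + ∑ i ∈ s, c i * x i) (c a * y a + ∑ i ∈ s, c i * y i)
          ≤ DD (c a * x a) (c a * y a) + DD (∑ i ∈ s, c i * x i) (∑ i ∈ s, c i * y i) :=
            DD_add hax hsx hay hsy hzero1 hzero2
        _ ≤ c a * DD (x a) (y a) + ∑ i ∈ s, c i * DD (x i) (y i) := by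
            rw [DD_homog (hc a) (hx a) (hy a) (h0 a)]
            exact add_le_add (le_refl _) ih
  exact key univ
end Dfacts

section ent_rep

lemma entD {ι : Type*} [Fintype ι] (w v : ι → ℝ) (hw : ∑ i, w i = 1) :
    (∑ i, w i * (v i * Real.log (v i))) -
      (∑ i, w i * v i) * Real.log (∑ i, w i * v i)
    = ∑ i, w i * DD (v i) (∑ i, w i * v i) := by
  set m := ∑ i, w i * v i with hm
  have expand : ∀ i, w i * DD (v i) m
      = w i * (v i * Real.log (v i)) - (w i * v i) * Real.log m - w i * v i + w i * m :=
    fun i => by unfold DD; ring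
  rw [Finset.sum_congr rfl fun i _ => expand i]
  rw [Finset.sum_add_distrib, Finset.sum_sub_distrib, Finset.sum_sub_distrib,
    ← Finset.sum_mul, ← hm, ← Finset.sum_mul, hw]
  ring

variable {μi : V → Fin q → ℝ}

lemma HH_eq_D (h1 : ∀ i, ∑ a, μi i a = 1) (A : Finset V) (g : (V → Fin q) → ℝ)
    (τ : V → Fin q) :
    HH μi A g τ = ∑ y, pm μi y * DD (g (glue A τ y)) (EE μi A g τ) :=
  entD (pm μi) (fun y => g (glue A τ y)) (pm_sum h1)

lemma HH_single_D (h1 : ∀ i, ∑ a, μi i a = 1) (i : V) (g : (V → Fin q) → ℝ)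
    (τ : V → Fin q) :
    HH μi {i} g τ
      = ∑ a, μi i a * DD (g (Function.update τ i a)) (EE μi {i} g τ) := by
  have hrep := entD (μi i) (fun a => g (Function.update τ i a)) (h1 i)
  unfold HH
  rw [EE_single h1 i (fun σ => g σ * Real.log (g σ)) τ, EE_single h1 i g τ]
  rw [hrep]

lemma HH_nonneg (hpos : ∀ i a, 0 < μi i a) (h1 : ∀ i, ∑ a, μi i a = 1)
    (A : Finset V) {g : (V → Fin q) → ℝ} (hg : ∀ σ, 0 ≤ g σ) (τ : V → Fin q) :
    0 ≤ HH μi A g τ := by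
  rw [HH_eq_D h1]
  refine Finset.sum_nonneg fun y _ => mul_nonneg (pm_nonneg hpos y) ?_
  refine DD_nonneg (hg _) (EE_nonneg hpos hg A τ) fun hE => ?_
  have := (Finset.sum_eq_zero_iff_of_nonneg
    (fun z (_ : z ∈ univ) => mul_nonneg (pm_nonneg hpos z) (hg (glue A τ z)))).mp hE
  have hz := this y (Finset.mem_univ y)
  rcases mul_eq_zero.mp hz with h | h
  · exact absurd h (pm_pos hpos y).ne'
  · exact h
end ent_rep

section convexity
variable {μi : V → Fin q → ℝ}

lemma HH_convex (hpos : ∀ i a, 0 < μi i a) (h1 : ∀ i, ∑ a, μi i a = 1)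
    {i : V} {C : Finset V} (hiC : i ∉ C) {g : (V → Fin q) → ℝ} (hg : ∀ σ, 0 ≤ g σ)
    (τ : V → Fin q) :
    HH μi {i} (EE μi C g) τ ≤ EE μi C (HH μi {i} g) τ := by
  set x : (V → Fin q) → Fin q → ℝ :=
    fun z a => g (Function.update (glue C τ z) i a) with hx
  set m : (V → Fin q) → ℝ := fun z => ∑ a, μi i a * x z a with hm
  have hxnn : ∀ z a, 0 ≤ x z a := fun z a => hg _
  have hmnn : ∀ z, 0 ≤ m z := fun z =>
    Finset.sum_nonneg fun a _ => mul_nonneg (hpos i a).le (hxnn z a)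
  have hm0 : ∀ z a, m z = 0 → x z a = 0 := by
    intro z a h
    have := (Finset.sum_eq_zero_iff_of_nonneg
      (fun b (_ : b ∈ univ) => mul_nonneg (hpos i b).le (hxnn z b))).mp h
    have hb := this a (Finset.mem_univ a)
    rcases mul_eq_zero.mp hb with h' | h'
    · exact absurd h' (hpos i a).ne'
    · exact h'
  -- V a : value of EE C g at update τ i a
  have hV : ∀ a, EE μi C g (Function.update τ i a) = ∑ z, pm μi z * x z a := by
    intro a
    unfold EE
    refine Finset.sum_congr rfl fun z _ => ?_
    rw [glue_update hiC]
  -- N = EE {i} (EE C g) τ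
  have hN : EE μi {i} (EE μi C g) τ = ∑ z, pm μi z * m z := by
    rw [EE_single h1]
    have : ∀ a, μi i a * EE μi C g (Function.update τ i a)
        = ∑ z, μi i a * (pm μi z * x z a) := by
      intro a; rw [hV a, Finset.mul_sum]
    rw [Finset.sum_congr rfl fun a _ => this a, Finset.sum_comm]
    refine Finset.sum_congr rfl fun z _ => ?_
    rw [hm, Finset.mul_sum]
    exact Finset.sum_congr rfl fun a _ => by ring
  -- LHS representation
  have hLHS : HH μi {i} (EE μi C g) τ
      = ∑ a, μi i a * DD (∑ z, pm μi z * x z a) (∑ z, pm μi z * m z) := by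
    rw [HH_single_D h1, hN]
    exact Finset.sum_congr rfl fun a _ => by rw [hV a]
  -- RHS representation
  have hRHS : EE μi C (HH μi {i} g) τ
      = ∑ a, μi i a * ∑ z, pm μi z * DD (x z a) (m z) := by
    unfold EE
    have : ∀ z, pm μi z * HH μi {i} g (glue C τ z)
        = ∑ a, μi i a * (pm μi z * DD (x z a) (m z)) := by
      intro z
      rw [HH_single_D h1]
      have hEz : EE μi {i} g (glue C τ z) = m z := by
        rw [EE_single h1, hm]
      rw [hEz, Finset.mul_sum]
      exact Finset.sum_congr rfl fun a _ => by ring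
    rw [Finset.sum_congr rfl fun z _ => this z, Finset.sum_comm]
    refine Finset.sum_congr rfl fun a _ => ?_
    rw [Finset.mul_sum]
  rw [hLHS, hRHS]
  refine Finset.sum_le_sum fun a _ => ?_
  refine mul_le_mul_of_nonneg_left ?_ (hpos i a).le
  exact DD_jensen (pm μi) (fun z => x z a) m (pm_nonneg hpos)
    (fun z => hxnn z a) hmnn (fun z => hm0 z a)

lemma HH_chain (h1 : ∀ i, ∑ a, μi i a = 1) (A : Finset V) (i : V)
    (f : (V → Fin q) → ℝ) (τ : V → Fin q) :
    HH μi (A ∪ {i}) f τ = EE μi {i} (HH μi A f) τ + HH μi {i} (EE μi A f) τ := by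
  have t1 : EE μi (A ∪ {i}) (fun σ => f σ * Real.log (f σ)) τ
      = EE μi {i} (EE μi A fun σ => f σ * Real.log (f σ)) τ :=
    (EE_tower h1 A {i} _ τ).symm
  have t2 : EE μi (A ∪ {i}) f τ = EE μi {i} (EE μi A f) τ :=
    (EE_tower h1 A {i} f τ).symm
  have t3 : EE μi {i} (HH μi A f) τ
      = EE μi {i} (EE μi A fun σ => f σ * Real.log (f σ)) τ
        - EE μi {i} (fun σ => EE μi A f σ * Real.log (EE μi A f σ)) τ := by
    have : HH μi A f = fun σ => EE μi A (fun σ' => f σ' * Real.log (f σ')) σ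
        - EE μi A f σ * Real.log (EE μi A f σ) := rfl
    rw [this, EE_sub]
  have t4 : HH μi {i} (EE μi A f) τ
      = EE μi {i} (fun σ => EE μi A f σ * Real.log (EE μi A f σ)) τ
        - EE μi {i} (EE μi A f) τ * Real.log (EE μi {i} (EE μi A f) τ) := rfl
  unfold HH
  rw [t1, t2]
  have hHH : (fun τ => EE μi A (fun σ => f σ * Real.log (f σ)) τ
      - EE μi A f τ * Real.log (EE μi A f τ)) = HH μi A f := rfl
  rw [hHH, t3]
  ring

lemma chain_global (h1 : ∀ i, ∑ a, μi i a = 1) (A : Finset V) (i : V)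
    (f : (V → Fin q) → ℝ) :
    ∑ τ, pm μi τ * HH μi (A ∪ {i}) f τ
      = ∑ τ, pm μi τ * HH μi A f τ + ∑ τ, pm μi τ * HH μi {i} (EE μi A f) τ := by
  have : ∀ τ, pm μi τ * HH μi (A ∪ {i}) f τ
      = pm μi τ * EE μi {i} (HH μi A f) τ + pm μi τ * HH μi {i} (EE μi A f) τ := by
    intro τ; rw [HH_chain h1 A i f τ]; ring
  rw [Finset.sum_congr rfl fun τ _ => this τ, Finset.sum_add_distrib,
    EE_global h1 {i} (HH μi A f)]

lemma mono_global (hpos : ∀ i a, 0 < μi i a) (h1 : ∀ i, ∑ a, μi i a = 1)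
    {i : V} {C C' : Finset V} (hi : i ∉ C') {f : (V → Fin q) → ℝ} (hf : ∀ σ, 0 ≤ f σ) :
    ∑ τ, pm μi τ * HH μi {i} (EE μi (C ∪ C') f) τ
      ≤ ∑ τ, pm μi τ * HH μi {i} (EE μi C f) τ := by
  have hE : EE μi (C ∪ C') f = EE μi C' (EE μi C f) :=
    funext fun τ => (EE_tower h1 C C' f τ).symm
  rw [hE]
  have hgnn : ∀ σ, 0 ≤ EE μi C f σ := fun σ => EE_nonneg hpos hf C σ
  calc ∑ τ, pm μi τ * HH μi {i} (EE μi C' (EE μi C f)) τ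
      ≤ ∑ τ, pm μi τ * EE μi C' (HH μi {i} (EE μi C f)) τ :=
        Finset.sum_le_sum fun τ _ => mul_le_mul_of_nonneg_left
          (HH_convex hpos h1 hi hgnn τ) (pm_nonneg hpos τ)
    _ = ∑ τ, pm μi τ * HH μi {i} (EE μi C f) τ :=
        EE_global h1 C' (HH μi {i} (EE μi C f))
end convexity

section bridge
variable {μi : V → Fin q → ℝ}

lemma indicator_prod (hpos : ∀ i a, 0 < μi i a) (A : Finset V) (τ σ : V → Fin q) :
    (if ∀ i ∉ A, σ i = τ i then pm μi σ else 0)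
      = ∏ i, (if i ∈ A then μi i (σ i) else if σ i = τ i then μi i (σ i) else 0) := by
  by_cases hag : ∀ i ∉ A, σ i = τ i
  · rw [if_pos hag]
    unfold pm
    refine Finset.prod_congr rfl fun j _ => ?_
    by_cases hj : j ∈ A
    · rw [if_pos hj]
    · rw [if_neg hj, if_pos (hag j hj)]
  · rw [if_neg hag]
    push_neg at hag
    obtain ⟨j, hj, hne⟩ := hag
    refine (Finset.prod_eq_zero (Finset.mem_univ j) ?_).symm
    rw [if_neg hj, if_neg hne]

lemma Z_eq (hpos : ∀ i a, 0 < μi i a) (h1 : ∀ i, ∑ a, μi i a = 1) (A : Finset V)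
    (τ : V → Fin q) :
    (∑ σ' : V → Fin q, if ∀ i ∉ A, σ' i = τ i then pm μi σ' else 0)
      = ∏ i, (if i ∈ A then 1 else μi i (τ i)) := by
  rw [Finset.sum_congr rfl fun σ' _ => indicator_prod hpos A τ σ',
    sum_pi_prod (fun i a => if i ∈ A then μi i a else if a = τ i then μi i a else 0)]
  refine Finset.prod_congr rfl fun j _ => ?_
  by_cases hj : j ∈ A
  · simp only [if_pos hj]; exact h1 j
  · simp only [if_neg hj]
    rw [Finset.sum_ite_eq' univ (τ j) (fun a => μi j a)]
    simp

lemma Z_pos (hpos : ∀ i a, 0 < μi i a) (h1 : ∀ i, ∑ a, μi i a = 1) (A : Finset V)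
    (τ : V → Fin q) :
    0 < ∑ σ' : V → Fin q, if ∀ i ∉ A, σ' i = τ i then pm μi σ' else 0 := by
  rw [Z_eq hpos h1]
  refine Finset.prod_pos fun i _ => ?_
  by_cases hi : i ∈ A
  · simp [hi]
  · simp [hi, hpos i (τ i)]

lemma sum_condMeas_mul (hpos : ∀ i a, 0 < μi i a) (h1 : ∀ i, ∑ a, μi i a = 1)
    (A : Finset V) (τ : V → Fin q) (h : (V → Fin q) → ℝ) :
    ∑ σ, condMeas (pm μi) A τ σ * h σ = EE μi A h τ := by
  set Z := ∑ σ' : V → Fin q, if ∀ i ∉ A, σ' i = τ i then pm μi σ' else 0 with hZ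
  have hZpos := Z_pos hpos h1 A τ
  have key : Z * EE μi A h τ
      = ∑ σ : V → Fin q, (if ∀ i ∉ A, σ i = τ i then pm μi σ else 0) * h σ := by
    have e1 : Z * EE μi A h τ
        = ∑ u : V → Fin q, ∑ w : V → Fin q, pm μi u * pm μi w *
            ((if ∀ i ∉ A, u i = τ i then (1:ℝ) else 0) * h (glue A τ w)) := by
      rw [hZ, Finset.sum_mul]
      refine Finset.sum_congr rfl fun u _ => ?_
      rw [show (if ∀ i ∉ A, u i = τ i then pm μi u else 0)
          = pm μi u * (if ∀ i ∉ A, u i = τ i then (1:ℝ) else 0) by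
            by_cases hc : ∀ i ∉ A, u i = τ i <;> simp [hc]]
      unfold EE
      rw [Finset.mul_sum]
      refine Finset.sum_congr rfl fun w _ => by ring
    rw [e1, swap_sum A (fun u w => (if ∀ i ∉ A, u i = τ i then (1:ℝ) else 0) * h (glue A τ w))]
    have e2 : ∀ u w : V → Fin q,
        pm μi u * pm μi w *
          ((if ∀ i ∉ A, (glue A w u) i = τ i then (1:ℝ) else 0) * h (glue A τ (glue A u w)))
        = pm μi u * (pm μi w * ((if ∀ i ∉ A, w i = τ i then (1:ℝ) else 0) * h (glue A τ w))) := by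
      intro u w
      have hc : (∀ i ∉ A, (glue A w u) i = τ i) ↔ (∀ i ∉ A, w i = τ i) := by
        constructor <;> intro hh i hi <;> have := hh i hi <;> simpa [glue, hi] using this
      have hgl : glue A τ (glue A u w) = glue A τ w := by
        funext j; by_cases hj : j ∈ A <;> simp [glue, hj]
      rw [hgl]
      by_cases hw : ∀ i ∉ A, w i = τ i
      · rw [if_pos (hc.mpr hw), if_pos hw]; ring
      · rw [if_neg (fun hcc => hw (hc.mp hcc)), if_neg hw]; ring
    rw [Finset.sum_congr rfl fun u _ => Finset.sum_congr rfl fun w _ => e2 u w]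
    rw [show (∑ u : V → Fin q, ∑ w : V → Fin q,
        pm μi u * (pm μi w * ((if ∀ i ∉ A, w i = τ i then (1:ℝ) else 0) * h (glue A τ w))))
        = (∑ u : V → Fin q, pm μi u) *
          (∑ w : V → Fin q, pm μi w * ((if ∀ i ∉ A, w i = τ i then (1:ℝ) else 0) * h (glue A τ w)))
        from by rw [Finset.sum_mul_sum]]
    rw [pm_sum h1, one_mul]
    refine Finset.sum_congr rfl fun w _ => ?_
    by_cases hw : ∀ i ∉ A, w i = τ i
    · rw [if_pos hw, if_pos hw, glue_of_agree hw]; ring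
    · rw [if_neg hw, if_neg hw]; ring
  have final : ∀ σ, condMeas (pm μi) A τ σ * h σ
      = ((if ∀ i ∉ A, σ i = τ i then pm μi σ else 0) * h σ) / Z := by
    intro σ
    unfold condMeas
    rw [← hZ, div_mul_eq_mul_div]
  rw [Finset.sum_congr rfl fun σ _ => final σ, ← Finset.sum_div, ← key, hZ]
  field_simp
end bridge


section assemble
variable {μi : V → Fin q → ℝ}

lemma entA_eq_HH (hpos : ∀ i a, 0 < μi i a) (h1 : ∀ i, ∑ a, μi i a = 1)
    (A : Finset V) (f : (V → Fin q) → ℝ) (τ : V → Fin q) :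
    entA (pm μi) A f τ = HH μi A f τ := by
  unfold entA ent HH
  rw [sum_condMeas_mul hpos h1 A τ (fun σ => f σ * Real.log (f σ)),
    sum_condMeas_mul hpos h1 A τ f]

lemma HH_empty (h1 : ∀ i, ∑ a, μi i a = 1) (f : (V → Fin q) → ℝ) (τ : V → Fin q) :
    HH μi ∅ f τ = 0 := by
  unfold HH
  rw [EE_empty h1, EE_empty h1]
  ring

lemma ent_repr (h1 : ∀ i, ∑ a, μi i a = 1) (f : (V → Fin q) → ℝ) :
    ∑ τ, pm μi τ * HH μi univ f τ = ent (pm μi) f := by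
  have hc : ∀ τ : V → Fin q, HH μi univ f τ = ent (pm μi) f := by
    intro τ
    unfold HH ent
    rw [EE_univ (fun σ => f σ * Real.log (f σ)) τ, EE_univ f τ]
  rw [Finset.sum_congr rfl fun τ _ => by rw [hc τ], ← Finset.sum_mul, pm_sum h1, one_mul]

/-- rank of a vertex -/
def rk (V : Type*) [Fintype V] : V → ℕ := fun i => ((Fintype.equivFin V) i : ℕ)

lemma rk_inj : Function.Injective (rk V) := by
  intro a b h
  have := Fin.val_injective h
  exact (Fintype.equivFin V).injective this

def LtS (i : V) : Finset V := univ.filter (fun j => rk V j < rk V i)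

def eCoef (μi : V → Fin q → ℝ) (f : (V → Fin q) → ℝ) (i : V) : ℝ :=
  ∑ τ, pm μi τ * HH μi {i} (EE μi (LtS i) f) τ

lemma eCoef_nonneg (hpos : ∀ i a, 0 < μi i a) (h1 : ∀ i, ∑ a, μi i a = 1)
    {f : (V → Fin q) → ℝ} (hf : ∀ σ, 0 ≤ f σ) (i : V) : 0 ≤ eCoef μi f i :=
  Finset.sum_nonneg fun τ _ => mul_nonneg (pm_nonneg hpos τ)
    (HH_nonneg hpos h1 {i} (fun σ => EE_nonneg hpos hf (LtS i) σ) τ)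

lemma claim1 (hpos : ∀ i a, 0 < μi i a) (h1 : ∀ i, ∑ a, μi i a = 1)
    {f : (V → Fin q) → ℝ} (hf : ∀ σ, 0 ≤ f σ) (A : Finset V) :
    ∑ i ∈ A, eCoef μi f i ≤ ∑ τ, pm μi τ * HH μi A f τ := by
  induction A using Finset.strongInduction with
  | _ A ih =>
    rcases Finset.eq_empty_or_nonempty A with rfl | hA
    · simp only [Finset.sum_empty]
      rw [Finset.sum_congr rfl fun τ _ => by rw [HH_empty h1 f τ]]
      simp
    · obtain ⟨i, hiA, hmax⟩ := Finset.exists_max_image A (rk V) hA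
      set A' := A.erase i with hA'
      have hiA' : i ∉ A' := Finset.notMem_erase i A
      have hA'ss : A' ⊂ A := Finset.erase_ssubset hiA
      have hins : A' ∪ {i} = A := by
        rw [Finset.union_comm, ← Finset.insert_eq, Finset.insert_erase hiA]
      have hsum : ∑ j ∈ A, eCoef μi f j = eCoef μi f i + ∑ j ∈ A', eCoef μi f j :=
        (Finset.add_sum_erase A _ hiA).symm
      have hchain := chain_global h1 A' i f
      rw [hins] at hchain
      have hIH := ih A' hA'ss
      have hsubLt : A' ⊆ LtS i := by
        intro j hj
        have hjA : j ∈ A := Finset.mem_of_mem_erase hj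
        have hne : j ≠ i := Finset.ne_of_mem_erase hj
        have hle : rk V j ≤ rk V i := hmax j hjA
        have : rk V j ≠ rk V i := fun h => hne (rk_inj h)
        exact Finset.mem_filter.mpr ⟨Finset.mem_univ j, lt_of_le_of_ne hle this⟩
      have hLt : A' ∪ (LtS i \ A') = LtS i := Finset.union_sdiff_of_subset hsubLt
      have hiC' : i ∉ LtS i \ A' := by
        intro hmem
        have := Finset.mem_sdiff.mp hmem
        exact absurd (Finset.mem_filter.mp this.1).2 (lt_irrefl _)
      have hmono := mono_global hpos h1 hiC' hf (C := A') (μi := μi)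
      rw [hLt] at hmono
      have : eCoef μi f i ≤ ∑ τ, pm μi τ * HH μi {i} (EE μi A' f) τ := hmono
      linarith [hIH, this, hchain.ge]

lemma claim2 (hpos : ∀ i a, 0 < μi i a) (h1 : ∀ i, ∑ a, μi i a = 1)
    (f : (V → Fin q) → ℝ) (m : ℕ) :
    ∑ i ∈ univ.filter (fun j => rk V j < m), eCoef μi f i
      = ∑ τ, pm μi τ * HH μi (univ.filter (fun j => rk V j < m)) f τ := by
  induction m with
  | zero =>
    simp only [Nat.not_lt_zero, Finset.filter_false, Finset.sum_empty]
    rw [Finset.sum_congr rfl fun τ _ => by rw [HH_empty h1 f τ]]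
    simp
  | succ m ihm =>
    by_cases hm : m < Fintype.card V
    · set i : V := (Fintype.equivFin V).symm ⟨m, hm⟩ with hi
      have hrk : rk V i = m := by
        rw [hi]; unfold rk; rw [Equiv.apply_symm_apply]
      have hGsucc : univ.filter (fun j => rk V j < m + 1)
          = (univ.filter (fun j => rk V j < m)) ∪ {i} := by
        ext j
        simp only [Finset.mem_filter, Finset.mem_univ, true_and, Finset.mem_union,
          Finset.mem_singleton]
        constructor
        · intro hj
          rcases Nat.lt_succ_iff_lt_or_eq.mp hj with h | h
          · exact Or.inl h
          · right
            apply rk_inj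
            rw [hrk]; exact h
        · rintro (h | rfl)
          · exact Nat.lt_succ_of_lt h
          · rw [hrk]; exact Nat.lt_succ_self m
      have hiG : i ∉ univ.filter (fun j => rk V j < m) := by
        simp only [Finset.mem_filter, hrk]
        exact fun h => absurd h.2 (lt_irrefl m)
      have hLtS : LtS i = univ.filter (fun j => rk V j < m) := by
        unfold LtS; rw [hrk]
      rw [hGsucc]
      rw [show (univ.filter (fun j => rk V j < m)) ∪ {i}
          = insert i (univ.filter (fun j => rk V j < m)) by
            rw [Finset.union_comm, ← Finset.insert_eq]]
      rw [Finset.sum_insert hiG]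
      rw [show insert i (univ.filter (fun j => rk V j < m))
          = (univ.filter (fun j => rk V j < m)) ∪ {i} by
            rw [Finset.union_comm, ← Finset.insert_eq]]
      rw [chain_global h1 _ i f, ← ihm]
      unfold eCoef
      rw [hLtS]
      ring
    · have heq : ∀ j : V, (rk V j < m + 1) = (rk V j < m) := by
        intro j
        have hj : rk V j < Fintype.card V := (Fintype.equivFin V j).isLt
        have h2 : rk V j < m := lt_of_lt_of_le hj (Nat.le_of_not_lt hm)
        simp [h2, Nat.lt_succ_of_lt h2]
      simp only [heq]
      exact ihm

lemma claim2' (hpos : ∀ i a, 0 < μi i a) (h1 : ∀ i, ∑ a, μi i a = 1)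
    (f : (V → Fin q) → ℝ) :
    ∑ i : V, eCoef μi f i = ent (pm μi) f := by
  have huniv : univ.filter (fun j => rk V j < Fintype.card V) = (univ : Finset V) := by
    ext j
    simp [(Fintype.equivFin V j).isLt, rk]
  have := claim2 hpos h1 f (Fintype.card V)
  rw [huniv] at this
  rw [this, ent_repr h1 f]
end assemble

/-- Product measures satisfy the Shearer entropy inequality with constant 1:
`γ(α) Ent_μ f ≤ Σ_A α_A μ(Ent_A f)`. -/
theorem productShearer [Nonempty V]
    (μi : V → Fin q → ℝ) (hpos : ∀ i a, 0 < μi i a) (h1 : ∀ i, ∑ a, μi i a = 1)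
    (α : Finset V → ℝ) (hα : ∀ A, 0 ≤ α A) (hα1 : ∑ A : Finset V, α A = 1)
    (f : (V → Fin q) → ℝ) (hf : ∀ σ, 0 ≤ f σ) :
    gam α * ent (fun σ => ∏ i, μi i (σ i)) f ≤
      ∑ A : Finset V, α A *
        ∑ τ, (∏ i, μi i (τ i)) * entA (fun σ => ∏ i, μi i (σ i)) A f τ := by
  have hgam_le : ∀ i : V, gam α ≤ ∑ A ∈ univ.filter (fun A => i ∈ A), α A := by
    intro i
    exact ciInf_le (Set.Finite.bddBelow (Set.finite_range _)) i
  have hswap : ∑ i : V, ∑ A ∈ univ.filter (fun A => i ∈ A), α A * eCoef μi f i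
      = ∑ A : Finset V, ∑ i ∈ A, α A * eCoef μi f i := by
    have h1' : ∀ i : V, ∑ A ∈ univ.filter (fun A => i ∈ A), α A * eCoef μi f i
        = ∑ A : Finset V, if i ∈ A then α A * eCoef μi f i else 0 := fun i =>
      Finset.sum_filter _ _
    rw [Finset.sum_congr rfl fun i _ => h1' i, Finset.sum_comm]
    refine Finset.sum_congr rfl fun A _ => ?_
    rw [Finset.sum_ite_mem, Finset.univ_inter]
  calc gam α * ent (fun σ => ∏ i, μi i (σ i)) f
      = gam α * ∑ i, eCoef μi f i := by
        rw [claim2' hpos h1 f]; rfl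
    _ = ∑ i, gam α * eCoef μi f i := Finset.mul_sum _ _ _
    _ ≤ ∑ i, (∑ A ∈ univ.filter (fun A => i ∈ A), α A) * eCoef μi f i :=
        Finset.sum_le_sum fun i _ => mul_le_mul_of_nonneg_right (hgam_le i)
          (eCoef_nonneg hpos h1 hf i)
    _ = ∑ i : V, ∑ A ∈ univ.filter (fun A => i ∈ A), α A * eCoef μi f i :=
        Finset.sum_congr rfl fun i _ => Finset.sum_mul _ _ _
    _ = ∑ A : Finset V, ∑ i ∈ A, α A * eCoef μi f i := hswap
    _ = ∑ A : Finset V, α A * ∑ i ∈ A, eCoef μi f i :=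
        Finset.sum_congr rfl fun A _ => (Finset.mul_sum _ _ _).symm
    _ ≤ ∑ A : Finset V, α A * ∑ τ, pm μi τ * HH μi A f τ :=
        Finset.sum_le_sum fun A _ => mul_le_mul_of_nonneg_left
          (claim1 hpos h1 hf A) (hα A)
    _ = ∑ A : Finset V, α A * ∑ τ, (∏ i, μi i (τ i)) * entA (fun σ => ∏ i, μi i (σ i)) A f τ := by
        refine Finset.sum_congr rfl fun A _ => ?_
        congr 1
        refine Finset.sum_congr rfl fun τ _ => ?_
        rw [show entA (fun σ => ∏ i, μi i (σ i)) A f τ = entA (pm μi) A f τ from rfl,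
          entA_eq_HH hpos h1 A f τ]
        rfl
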